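/- arXiv:math/0407505 — 3 statements merged into one kernel-verified Lean document; each statement's English description precedes it below -/
import Mathlib

section
/- For integers g ≥ 2 and N ≥ 1, there exists a group homomorphism ρ from the genus-g surface group Γ_g to GL_N(ℂ) such that the associated representation of Γ_g on ℂ^N is irreducible, i.e., the ℂ-subalgebra of Mat_N(ℂ) generated by the image of ρ is all of Mat_N(ℂ). -/
def surfaceRel (g : ℕ) : FreeGroup (Fin g ⊕ Fin g) :=
  ((List.finRange g).map (fun i =>
    FreeGroup.of (Sum.inl i) * FreeGroup.of (Sum.inr i) *
      (FreeGroup.of (Sum.inl i))⁻¹ * (FreeGroup.of (Sum.inr i))⁻¹)).prod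

/-- The genus-`g` surface group, with presentation
`⟨X_1, …, X_g, Y_1, …, Y_g | ∏ i, X_i Y_i X_i⁻¹ Y_i⁻¹ = 1⟩`. -/
def SurfaceGroup (g : ℕ) : Type :=
  PresentedGroup ({surfaceRel g} : Set (FreeGroup (Fin g ⊕ Fin g)))

instance (g : ℕ) : Group (SurfaceGroup g) :=
  inferInstanceAs (Group (PresentedGroup _))


open Polynomial Matrix
set_option linter.unusedSectionVars false
open Fin.NatCast Fin.CommRing

section Aux


variable {N : ℕ} [NeZero N]

/-- evaluating a polynomial on a diagonal matrix. -/
lemma aeval_diagonal (d : Fin N → ℂ) (p : ℂ[X]) :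
    Polynomial.aeval (Matrix.diagonal d) p = Matrix.diagonal (fun j => p.eval (d j)) := by
  have h1 : Matrix.diagonal d = (Matrix.diagonalAlgHom ℂ : (Fin N → ℂ) →ₐ[ℂ] _) d := rfl
  rw [h1, Polynomial.aeval_algHom_apply]
  show Matrix.diagonal (Polynomial.aeval d p) = _
  have h2 : (Polynomial.aeval d p) = fun j => p.eval (d j) := by
    funext j
    have := Polynomial.aeval_algHom_apply (Pi.evalAlgHom ℂ (fun _ : Fin N => ℂ) j) d p
    simpa [Polynomial.coe_aeval_eq_eval] using this.symm
  rw [h2]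

noncomputable def dd : Fin N → ℂ := fun i => (i : ℕ) + 1

lemma dd_inj : Function.Injective (dd (N := N)) := by
  intro i j h
  have : ((i : ℕ) : ℂ) = ((j : ℕ) : ℂ) := by
    simpa [dd] using h
  exact Fin.ext (Nat.cast_injective this)

lemma dd_ne_zero (i : Fin N) : dd i ≠ 0 := by
  have : ((i : ℕ) + 1 : ℂ) ≠ 0 := by
    exact_mod_cast (Nat.cast_ne_zero (R := ℂ)).2 (Nat.succ_ne_zero i)
  simpa [dd] using this

noncomputable def DD : Matrix (Fin N) (Fin N) ℂ := Matrix.diagonal dd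

noncomputable def sigma : Equiv.Perm (Fin N) := Equiv.addRight 1

noncomputable def PP : Matrix (Fin N) (Fin N) ℂ := (sigma (N := N)).toPEquiv.toMatrix

lemma PP_mul_std (x y : Fin N) (c : ℂ) :
    PP * Matrix.single x y c = Matrix.single (x - 1) y c := by
  rw [PP, PEquiv.toMatrix_toPEquiv_mul]
  ext i j
  simp only [Matrix.submatrix_apply, id_eq, Matrix.single, Matrix.of_apply]
  have : x = sigma i ↔ x - 1 = i := by
    simp only [sigma, Equiv.coe_addRight]
    constructor
    · rintro rfl; simp
    · rintro rfl; simp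
  simp [this]

lemma PP_pow_mul_std (k : ℕ) (x y : Fin N) (c : ℂ) :
    PP ^ k * Matrix.single x y c = Matrix.single (x - k) y c := by
  induction k with
  | zero => simp
  | succ n ih =>
      rw [pow_succ', mul_assoc, ih, PP_mul_std]
      congr 1
      push_cast
      ring

lemma key : Algebra.adjoin ℂ ({DD, PP} : Set (Matrix (Fin N) (Fin N) ℂ)) = ⊤ := by
  set S := Algebra.adjoin ℂ ({DD, PP} : Set (Matrix (Fin N) (Fin N) ℂ)) with hS
  have hD : DD (N := N) ∈ S := Algebra.subset_adjoin (by simp)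
  have hP : PP (N := N) ∈ S := Algebra.subset_adjoin (by simp)
  have hdiag : ∀ i : Fin N, Matrix.single i i (1 : ℂ) ∈ S := by
    intro i
    have hmem : Polynomial.aeval (DD (N := N)) (Lagrange.basis Finset.univ dd i) ∈ S := by
      refine Algebra.adjoin_mono ?_ (Polynomial.aeval_mem_adjoin_singleton ℂ _)
      simp
    have heq : Polynomial.aeval (DD (N := N)) (Lagrange.basis Finset.univ dd i)
        = Matrix.single i i (1 : ℂ) := by
      rw [DD, aeval_diagonal]
      ext a b
      by_cases hab : a = b
      · subst hab
        by_cases hia : i = a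
        · subst hia
          simp [Matrix.diagonal_apply, Lagrange.eval_basis_self (dd_inj.injOn) (Finset.mem_univ i)]
        · simp [Matrix.diagonal_apply, Lagrange.eval_basis_of_ne hia (Finset.mem_univ a),
            Matrix.single, hia]
      · simp only [Matrix.diagonal_apply, hab, if_false, Matrix.single, Matrix.of_apply]
        rw [if_neg]
        rintro ⟨rfl, rfl⟩
        exact hab rfl
    rwa [heq] at hmem
  have hstd : ∀ i j : Fin N, Matrix.single i j (1 : ℂ) ∈ S := by
    intro i j
    have := S.mul_mem (S.pow_mem hP ((j - i).val)) (hdiag j)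
    rwa [PP_pow_mul_std, Fin.cast_val_eq_self, sub_sub_cancel] at this
  rw [eq_top_iff]
  intro M _
  rw [Matrix.matrix_eq_sum_single M]
  refine S.sum_mem fun i _ => S.sum_mem fun j _ => ?_
  have : Matrix.single i j (M i j) = (M i j) • Matrix.single i j (1 : ℂ) := by
    simp [Matrix.smul_single]
  rw [this]
  exact S.smul_mem (hstd i j) _

end Aux


noncomputable def DDu {N : ℕ} [NeZero N] : Matrix.GeneralLinearGroup (Fin N) ℂ :=
  ⟨DD, Matrix.diagonal fun i => (dd i)⁻¹,
    by simp [DD, Matrix.diagonal_mul_diagonal, mul_inv_cancel₀ (dd_ne_zero _)],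
    by simp [DD, Matrix.diagonal_mul_diagonal, inv_mul_cancel₀ (dd_ne_zero _)]⟩

noncomputable def PPu {N : ℕ} [NeZero N] : Matrix.GeneralLinearGroup (Fin N) ℂ :=
  ⟨PP, (sigma (N := N))⁻¹.toPEquiv.toMatrix,
    by rw [PP, ← PEquiv.toMatrix_trans, ← Equiv.toPEquiv_trans, show (sigma (N:=N))⁻¹ = (sigma (N:=N)).symm from rfl, Equiv.self_trans_symm, Equiv.toPEquiv_refl,
      PEquiv.toMatrix_refl],
    by rw [PP, ← PEquiv.toMatrix_trans, ← Equiv.toPEquiv_trans, show (sigma (N:=N))⁻¹ = (sigma (N:=N)).symm from rfl, Equiv.symm_trans_self, Equiv.toPEquiv_refl,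
      PEquiv.toMatrix_refl]⟩

/-- For `g ≥ 2` and `N ≥ 1`, the genus-`g` surface group has an irreducible
`N`-dimensional complex representation: a homomorphism to `GL_N(ℂ)` whose image
generates the full matrix algebra `Mat_N(ℂ)` as a `ℂ`-subalgebra. -/
theorem surfaceGroup_exists_irreducible_rep (g N : ℕ) (hg : 2 ≤ g) (hN : 1 ≤ N) :
    ∃ ρ : SurfaceGroup g →* Matrix.GeneralLinearGroup (Fin N) ℂ,
      Algebra.adjoin ℂ
        ((fun A : Matrix.GeneralLinearGroup (Fin N) ℂ => (A : Matrix (Fin N) (Fin N) ℂ)) ''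
          Set.range ρ) = ⊤ := by
  haveI : NeZero N := ⟨by omega⟩
  set f : Fin g ⊕ Fin g → Matrix.GeneralLinearGroup (Fin N) ℂ :=
    Sum.elim (fun i => if (i : ℕ) = 0 then DDu else if (i : ℕ) = 1 then PPu else 1)
      (fun _ => 1) with hf
  have hrel : ∀ r ∈ ({surfaceRel g} : Set (FreeGroup (Fin g ⊕ Fin g))),
      FreeGroup.lift f r = 1 := by
    rintro r rfl
    rw [surfaceRel, map_list_prod]
    apply List.prod_eq_one
    intro x hx
    simp only [List.map_map, List.mem_map] at hx
    obtain ⟨i, -, rfl⟩ := hx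
    simp [hf, _root_.map_mul, map_inv]
  refine ⟨PresentedGroup.toGroup hrel, ?_⟩
  rw [eq_top_iff, ← key (N := N)]
  apply Algebra.adjoin_mono
  rintro M (rfl | rfl)
  · refine ⟨DDu, ⟨PresentedGroup.of (Sum.inl ⟨0, by omega⟩), ?_⟩, rfl⟩
    exact (PresentedGroup.toGroup.of hrel).trans (by simp [hf])
  · refine ⟨PPu, ⟨PresentedGroup.of (Sum.inl ⟨1, by omega⟩), ?_⟩, rfl⟩
    exact (PresentedGroup.toGroup.of hrel).trans (by simp [hf])
end

section
/- Let G be a finite group, let γ_1,…,γ_m ∈ G be pairwise non-conjugate elements, none of which is the identity, and let P ∈ ℂ[x_1,…,x_m] be a nonzero polynomial. Then there exists a finite-dimensional complex representation V of G such that P(χ_V(γ_1) − dim V, …, χ_V(γ_m) − dim V) ≠ 0, where χ_V denotes the character of V. -/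
open MvPolynomial in
theorem aux_nat_point : ∀ (n : ℕ) (Q : MvPolynomial (Fin n) ℂ), Q ≠ 0 →
    ∃ N : Fin n → ℕ, MvPolynomial.eval (fun i => (N i : ℂ)) Q ≠ 0 := by
  intro n
  induction n with
  | zero =>
    intro Q hQ
    refine ⟨fun i => 0, ?_⟩
    rw [MvPolynomial.eq_C_of_isEmpty Q] at hQ ⊢
    simpa using fun h => hQ (by simp [h])
  | succ n ih =>
    intro Q hQ
    set Q' := MvPolynomial.finSuccEquiv ℂ n Q with hQ'
    have hQ'ne : Q' ≠ 0 := by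
      simpa [hQ'] using (EmbeddingLike.map_ne_zero_iff (f := (MvPolynomial.finSuccEquiv ℂ n))).2 hQ
    have hlead : Q'.leadingCoeff ≠ 0 := Polynomial.leadingCoeff_ne_zero.2 hQ'ne
    obtain ⟨N', hN'⟩ := ih _ hlead
    set q : Polynomial ℂ := Q'.map (MvPolynomial.eval fun i => (N' i : ℂ)) with hq
    have hqne : q ≠ 0 := by
      intro h
      apply hN'
      have h2 := Polynomial.coeff_map (f := MvPolynomial.eval fun i => ((N' i : ℂ))) (p := Q') (n := Q'.natDegree)
      rw [← hq, h] at h2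
      rw [Polynomial.leadingCoeff]
      simpa using h2.symm
    -- roots of q are finite; naturals are infinite
    have : ∃ t : ℕ, ¬ q.IsRoot (t : ℂ) := by
      by_contra h
      push_neg at h
      have : Set.Infinite {x : ℂ | q.IsRoot x} := by
        apply Set.Infinite.mono (s := Set.range (fun t : ℕ => (t : ℂ)))
        · rintro x ⟨t, rfl⟩; exact h t
        · exact Set.infinite_range_of_injective Nat.cast_injective
      exact this (Polynomial.finite_setOf_isRoot hqne)
    obtain ⟨t, ht⟩ := this
    refine ⟨Fin.cons t N', ?_⟩
    have := MvPolynomial.eval_eq_eval_mv_eval' (fun i => (N' i : ℂ)) (t : ℂ) Q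
    rw [show (Fin.cons (t:ℂ) (fun i => (N' i : ℂ)) : Fin (n+1) → ℂ) = fun i => ((Fin.cons t N' : Fin (n+1) → ℕ) i : ℂ) from by
      funext i; refine Fin.cases ?_ ?_ i <;> simp] at this
    rw [this]
    exact ht

open MonoidAlgebra

variable {G : Type} [Group G] [Fintype G]

noncomputable abbrev AA (G : Type) [Group G] [Fintype G] := MonoidAlgebra ℂ G

-- left multiplication as a ℂ-bilinear action on a left submodule
noncomputable def Phi (S : Submodule (AA G) (AA G)) :
    AA G →ₗ[ℂ] (↥S →ₗ[ℂ] ↥S) where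
  toFun u :=
    { toFun := fun x => ⟨u * (x : AA G), by
        simpa [smul_eq_mul] using S.smul_mem u x.2⟩
      map_add' := fun x y => by ext; simp [mul_add]
      map_smul' := fun c x => by ext; simp [mul_smul_comm] }
  map_add' u v := by ext x; simp [add_mul]
  map_smul' c u := by ext x; simp [smul_mul_assoc]

@[simp] lemma Phi_apply (S : Submodule (AA G) (AA G)) (u : AA G) (x : ↥S) :
    ((Phi S u x : ↥S) : AA G) = u * (x : AA G) := rfl

noncomputable def rhoS (S : Submodule (AA G) (AA G)) : Representation ℂ G ↥S where
  toFun g := Phi S (MonoidAlgebra.of ℂ G g)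
  map_one' := by ext x; simp
  map_mul' g h := by ext x; simp [mul_assoc]

noncomputable instance : FiniteDimensional ℂ (AA G) :=
  Module.Finite.equiv (MonoidAlgebra.coeffLinearEquiv ℂ).symm

instance (S : Submodule (AA G) (AA G)) : FiniteDimensional ℂ ↥S :=
  FiniteDimensional.of_injective ((S.subtype).restrictScalars ℂ) Subtype.coe_injective

noncomputable def VS (S : Submodule (AA G) (AA G)) : FDRep ℂ G := FDRep.of (rhoS S)

lemma VS_char (S : Submodule (AA G) (AA G)) (g : G) :
    (VS S).character g = LinearMap.trace ℂ ↥S (Phi S (MonoidAlgebra.of ℂ G g)) := rfl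

theorem char_span {n : ℕ} (g0 : Fin n → G)
    (hpair : ∀ i j, i ≠ j → ¬ IsConj (g0 i) (g0 j)) :
    Submodule.span ℂ (Set.range fun V : FDRep ℂ G => fun i => V.character (g0 i)) = ⊤ := by
  classical
  by_contra hne
  obtain ⟨φ, hφne, hφ⟩ := Submodule.exists_dual_map_eq_bot_of_lt_top
    (lt_top_iff_ne_top.2 hne) inferInstance
  have hφ0 : ∀ V : FDRep ℂ G, φ (fun i => V.character (g0 i)) = 0 := by
    intro V
    have : (fun i => V.character (g0 i)) ∈ Submodule.span ℂ
        (Set.range fun V : FDRep ℂ G => fun i => V.character (g0 i)) :=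
      Submodule.subset_span ⟨V, rfl⟩
    have := Submodule.mem_map_of_mem (f := φ) this
    rw [hφ] at this
    simpa using this
  set c : Fin n → ℂ := fun i => φ (fun j => if i = j then 1 else 0) with hc
  have hphi_eq : ∀ x : Fin n → ℂ, φ x = ∑ i, x i * c i := by
    intro x
    have := LinearMap.pi_apply_eq_sum_univ φ x
    simpa [smul_eq_mul, hc] using this
  have hcne : c ≠ 0 := by
    intro h0
    apply hφne
    ext x
    simp [hphi_eq, h0]
  have H : ∀ V : FDRep ℂ G, ∑ i, c i * V.character (g0 i) = 0 := by
    intro V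
    have := hφ0 V
    rw [hphi_eq] at this
    simpa [mul_comm] using this
  -- the class function
  set K : Fin n → Finset G := fun i => Finset.univ.filter (fun x => IsConj (g0 i) x) with hK
  have hKcard : ∀ i, 0 < (K i).card := by
    intro i
    refine Finset.card_pos.2 ⟨g0 i, ?_⟩
    simp only [hK, Finset.mem_filter, Finset.mem_univ, true_and]
    exact IsConj.refl _
  set f : G → ℂ := fun x => ∑ i, if IsConj (g0 i) x then c i / (K i).card else 0 with hf
  have hfconj : ∀ (h x : G), f (h * x * h⁻¹) = f x := by
    intro h x
    apply Finset.sum_congr rfl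
    intro i _
    have : IsConj (g0 i) (h * x * h⁻¹) ↔ IsConj (g0 i) x := by
      constructor
      · intro hh
        exact hh.trans (isConj_iff.2 ⟨h⁻¹, by group⟩)
      · intro hh
        exact hh.trans (isConj_iff.2 ⟨h, rfl⟩)
    exact if_congr this rfl rfl
  -- the central element
  set a : AA G := ∑ x : G, f x • MonoidAlgebra.of ℂ G x with ha
  have hcomm : ∀ b : AA G, a * b = b * a := by
    intro b
    have hsingle : ∀ h : G, a * MonoidAlgebra.of ℂ G h = MonoidAlgebra.of ℂ G h * a := by
      intro h
      rw [ha, Finset.sum_mul, Finset.mul_sum]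
      have key : ∀ x : G, (f x • MonoidAlgebra.of ℂ G x) * MonoidAlgebra.of ℂ G h
          = f x • MonoidAlgebra.of ℂ G (x * h) := by
        intro x; rw [smul_mul_assoc]; congr 1
        simp [MonoidAlgebra.of_apply, MonoidAlgebra.single_mul_single]
      have key2 : ∀ x : G, MonoidAlgebra.of ℂ G h * (f x • MonoidAlgebra.of ℂ G x)
          = f x • MonoidAlgebra.of ℂ G (h * x) := by
        intro x; rw [mul_smul_comm]; congr 1
        simp [MonoidAlgebra.of_apply, MonoidAlgebra.single_mul_single]
      simp only [key, key2]
      apply Fintype.sum_bijective (fun x => h⁻¹ * x * h)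
        ((Group.mulRight_bijective h).comp (Group.mulLeft_bijective h⁻¹))
      intro x
      have h1 : f (h⁻¹ * x * h) = f x := by
        have := hfconj h⁻¹ x
        rwa [inv_inv] at this
      rw [h1]
      congr 1
      group
    -- extend to all b by induction
    induction b using MonoidAlgebra.induction_on with
    | of g => exact hsingle g
    | add p q hp hq => rw [mul_add, add_mul, hp, hq]
    | smul r p hp => rw [mul_smul_comm, smul_mul_assoc, hp]
  -- sum over group of f * character
  have hsum : ∀ V : FDRep ℂ G, ∑ x : G, f x * V.character x
      = ∑ i, c i * V.character (g0 i) := by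
    intro V
    have hconst : ∀ i, ∀ x ∈ K i, V.character x = V.character (g0 i) := by
      intro i x hxK
      simp only [hK, Finset.mem_filter, Finset.mem_univ, true_and] at hxK
      obtain ⟨u, hu⟩ := isConj_iff.1 hxK
      rw [← hu, FDRep.char_conj]
    calc ∑ x : G, f x * V.character x
        = ∑ x : G, ∑ i, (if IsConj (g0 i) x then (c i / (K i).card) * V.character x else 0) := by
          refine Finset.sum_congr rfl fun x _ => ?_
          rw [hf]
          rw [Finset.sum_mul]
          refine Finset.sum_congr rfl fun i _ => ?_
          rw [ite_mul, zero_mul]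
      _ = ∑ i, ∑ x : G, (if IsConj (g0 i) x then (c i / (K i).card) * V.character x else 0) :=
          Finset.sum_comm
      _ = ∑ i, c i * V.character (g0 i) := by
          refine Finset.sum_congr rfl fun i _ => ?_
          rw [← Finset.sum_filter]
          have : ∀ x ∈ K i, (c i / (K i).card) * V.character x
              = (c i / (K i).card) * V.character (g0 i) := by
            intro x hx
            rw [hconst i x hx]
          rw [Finset.sum_congr rfl this, Finset.sum_const, nsmul_eq_mul]
          have hcard : ((K i).card : ℂ) ≠ 0 := Nat.cast_ne_zero.2 (hKcard i).ne'
          field_simp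
  -- trace of a on any simple module is 0
  have key : ∀ S : Submodule (AA G) (AA G), IsSimpleModule (AA G) ↥S →
      ∀ x ∈ S, a * x = 0 := by
    intro S hS x hx
    haveI := hS
    haveI : Nontrivial ↥S := IsSimpleModule.nontrivial (AA G) ↥S
    set e : ↥S →ₗ[ℂ] ↥S := Phi S a with he
    have htr : LinearMap.trace ℂ ↥S e = 0 := by
      rw [he, ha, map_sum]
      have : ∀ x : G, Phi S (f x • MonoidAlgebra.of ℂ G x)
          = f x • Phi S (MonoidAlgebra.of ℂ G x) := fun x => map_smul _ _ _
      rw [Finset.sum_congr rfl fun x _ => this x, map_sum]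
      have : ∀ x : G, LinearMap.trace ℂ ↥S (f x • Phi S (MonoidAlgebra.of ℂ G x))
          = f x * (VS S).character x := by
        intro x
        rw [map_smul, smul_eq_mul, VS_char]
      rw [Finset.sum_congr rfl fun x _ => this x, hsum (VS S)]
      exact H (VS S)
    -- Schur: e is a scalar
    obtain ⟨μ, hμ⟩ := Module.End.exists_eigenvalue e
    obtain ⟨v, hv⟩ := hμ.exists_hasEigenvector
    have hlin : ∀ (r : AA G) (y : ↥S), e (r • y) = r • e y := by
      intro r y
      apply Subtype.ext
      show a * ((r • y : ↥S) : AA G) = ((r • e y : ↥S) : AA G)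
      rw [Submodule.coe_smul, Submodule.coe_smul, smul_eq_mul, smul_eq_mul,
        ← mul_assoc, hcomm r, mul_assoc]
      rfl
    let Z : Submodule (AA G) ↥S :=
      { carrier := {y | e y = μ • y}
        add_mem' := by
          intro p q hp hq
          simp only [Set.mem_setOf_eq, map_add] at *
          rw [hp, hq, smul_add]
        zero_mem' := by simp
        smul_mem' := by
          intro r y hy
          simp only [Set.mem_setOf_eq] at hy ⊢
          rw [hlin, hy]
          apply Subtype.ext
          rw [Submodule.coe_smul, Submodule.coe_smul_of_tower, Submodule.coe_smul_of_tower,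
            Submodule.coe_smul, smul_eq_mul, smul_eq_mul, mul_smul_comm] }
    have hZne : Z ≠ ⊥ := by
      intro hbot
      have hvZ : v ∈ Z := hv.apply_eq_smul
      rw [hbot, Submodule.mem_bot] at hvZ
      exact hv.2 hvZ
    have hZtop : Z = ⊤ := (eq_bot_or_eq_top Z).resolve_left hZne
    have heμ : ∀ y : ↥S, e y = μ • y := by
      intro y
      have : y ∈ Z := hZtop ▸ Submodule.mem_top
      exact this
    have hμ0 : μ = 0 := by
      have h1 : LinearMap.trace ℂ ↥S e = μ * (Module.finrank ℂ ↥S : ℂ) := by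
        have he2 : e = μ • LinearMap.id := by
          ext y
          rw [heμ]
          rfl
        rw [he2, map_smul, LinearMap.trace_id, smul_eq_mul]
      rw [htr] at h1
      have hfr : ((Module.finrank ℂ ↥S : ℂ)) ≠ 0 :=
        Nat.cast_ne_zero.2 (Module.finrank_pos).ne'
      exact (mul_eq_zero.1 h1.symm).resolve_right hfr
    have := heμ ⟨x, hx⟩
    rw [hμ0, zero_smul] at this
    have h3 := congrArg (Subtype.val) this
    rw [he] at h3
    simpa [Phi_apply] using h3
  -- a kills everything, hence a = 0
  haveI : NeZero ((Fintype.card G : ℂ)) := ⟨Nat.cast_ne_zero.2 Fintype.card_ne_zero⟩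
  have htop := IsSemisimpleModule.sSup_simples_eq_top (AA G) (AA G)
  let T : Submodule (AA G) (AA G) :=
    { carrier := {x | a * x = 0}
      add_mem' := by
        intro p q hp hq
        simp only [Set.mem_setOf_eq] at *
        rw [mul_add, hp, hq, add_zero]
      zero_mem' := by simp
      smul_mem' := by
        intro r x hx
        simp only [Set.mem_setOf_eq] at hx ⊢
        rw [smul_eq_mul, ← mul_assoc, hcomm r, mul_assoc, hx, mul_zero] }
  have hST : ∀ S ∈ {m : Submodule (AA G) (AA G) | IsSimpleModule (AA G) ↥m}, S ≤ T := by
    intro S hS x hx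
    exact key S hS x hx
  have hTtop : (⊤ : Submodule (AA G) (AA G)) ≤ T := htop ▸ sSup_le hST
  have ha0 : a = 0 := by
    have h1 : (1 : AA G) ∈ T := hTtop Submodule.mem_top
    have h2 : a * 1 = 0 := h1
    rwa [mul_one] at h2
  -- extract coefficients
  have hfi : ∀ x : G, f x = 0 := by
    intro x
    have h1 : (Finsupp.lapply x ∘ₗ (MonoidAlgebra.coeffLinearEquiv ℂ).toLinearMap : AA G →ₗ[ℂ] ℂ) a = f x := by
      rw [ha, map_sum]
      have : ∀ y : G, (Finsupp.lapply x ∘ₗ (MonoidAlgebra.coeffLinearEquiv ℂ).toLinearMap : AA G →ₗ[ℂ] ℂ) (f y • MonoidAlgebra.of ℂ G y)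
          = f y * (if y = x then 1 else 0) := by
        intro y
        rw [map_smul, smul_eq_mul]
        congr 1
        show (Finsupp.single y (1:ℂ)) x = _
        rw [Finsupp.single_apply]
      rw [Finset.sum_congr rfl fun y _ => this y]
      simp
    rw [ha0, map_zero] at h1
    exact h1.symm
  apply hcne
  funext i
  show c i = 0
  have h2 := hfi (g0 i)
  rw [hf] at h2
  simp only at h2
  rw [Finset.sum_eq_single i (fun j _ hj => if_neg (hpair j i hj))
    (fun hi => absurd (Finset.mem_univ i) hi)] at h2
  rw [if_pos (IsConj.refl _)] at h2
  have hcard : ((K i).card : ℂ) ≠ 0 := Nat.cast_ne_zero.2 (hKcard i).ne'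
  field_simp at h2
  simpa using h2


noncomputable def sumRep (V W : FDRep ℂ G) : FDRep ℂ G := FDRep.of
  { toFun := fun g => LinearMap.prodMap (V.ρ g) (W.ρ g)
    map_one' := by ext x <;> simp
    map_mul' := fun g h => by ext x <;> simp [Module.End.mul_apply]  }

lemma sumRep_char (V W : FDRep ℂ G) (g : G) :
    (sumRep V W).character g = V.character g + W.character g := by
  show LinearMap.trace ℂ _ (LinearMap.prodMap (V.ρ g) (W.ρ g)) = _
  rw [LinearMap.trace_prodMap']
  rfl

noncomputable def trivRep : FDRep ℂ G := FDRep.of (Representation.trivial ℂ (G := G) (V := ℂ))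

lemma trivRep_char (g : G) : (trivRep (G := G)).character g = 1 := by
  show LinearMap.trace ℂ ℂ ((1 : Representation ℂ G ℂ) g) = 1
  simp

theorem aux_nat_point' {σ : Type*} [Fintype σ] (Q : MvPolynomial σ ℂ) (hQ : Q ≠ 0) :
    ∃ N : σ → ℕ, MvPolynomial.eval (fun j => (N j : ℂ)) Q ≠ 0 := by
  classical
  let e := Fintype.equivFin σ
  have hR : (MvPolynomial.rename e Q) ≠ 0 := by
    intro h
    exact hQ (MvPolynomial.rename_injective e e.injective (by simpa using h))
  obtain ⟨N, hN⟩ := aux_nat_point _ _ hR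
  refine ⟨fun j => N (e j), ?_⟩
  rw [MvPolynomial.eval_rename] at hN
  exact hN


/-- If `γ_1, …, γ_m` are pairwise non-conjugate nontrivial elements of a finite group
`G` and `P` is a nonzero complex polynomial in `m` variables, then there is a
finite-dimensional complex representation `V` of `G` with
`P(χ_V(γ_1) − dim V, …, χ_V(γ_m) − dim V) ≠ 0`. -/
theorem finiteGroup_character_polynomial {G : Type} [Group G] [Finite G]
    (m : ℕ) (γ : Fin m → G)
    (hconj : ∀ i j, i ≠ j → ¬IsConj (γ i) (γ j)) (hne : ∀ i, γ i ≠ 1)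
    (P : MvPolynomial (Fin m) ℂ) (hP : P ≠ 0) :
    ∃ V : FDRep ℂ G,
      MvPolynomial.eval
        (fun i => FDRep.character V (γ i) - (Module.finrank ℂ V : ℂ)) P ≠ 0 := by
  classical
  cases nonempty_fintype G
  set u : FDRep ℂ G → (Fin m → ℂ) := fun V i => V.character (γ i) - V.character 1 with hu
  have hzero : u trivRep = 0 := by
    funext i
    show trivRep.character (γ i) - trivRep.character 1 = 0
    rw [trivRep_char, trivRep_char, sub_self]
  have hadd : ∀ V W, u (sumRep V W) = u V + u W := by
    intro V W; funext i
    simp only [hu, sumRep_char, Pi.add_apply]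
    ring
  let msub : AddSubmonoid (Fin m → ℂ) :=
    { carrier := Set.range u
      zero_mem' := ⟨trivRep, hzero⟩
      add_mem' := by
        rintro _ _ ⟨V, rfl⟩ ⟨W, rfl⟩
        exact ⟨sumRep V W, hadd V W⟩ }
  set g0 : Fin (m+1) → G := Fin.cons 1 γ with hg0
  have hpair : ∀ i j, i ≠ j → ¬ IsConj (g0 i) (g0 j) := by
    intro i j
    refine Fin.cases ?_ ?_ i
    · refine Fin.cases ?_ ?_ j
      · intro hij
        exact absurd rfl hij
      · intro j' hij hc
        simp only [hg0, Fin.cons_zero, Fin.cons_succ] at hc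
        exact hne j' (isConj_one_right.1 hc)
    · intro i'
      refine Fin.cases ?_ ?_ j
      · intro hij hc
        simp only [hg0, Fin.cons_zero, Fin.cons_succ] at hc
        exact hne i' (isConj_one_left.1 hc)
      · intro j' hij hc
        simp only [hg0, Fin.cons_succ] at hc
        exact hconj i' j' (fun hh => hij (by rw [hh])) hc
  have hspan := char_span g0 hpair
  let π : (Fin (m+1) → ℂ) →ₗ[ℂ] (Fin m → ℂ) :=
    { toFun := fun x i => x i.succ - x 0
      map_add' := by intro x y; funext i; simp only [Pi.add_apply]; ring
      map_smul' := by intro c x; funext i; simp only [Pi.smul_apply, smul_eq_mul,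
        RingHom.id_apply]; ring }
  have hπ : ∀ x i, π x i = x i.succ - x 0 := fun _ _ => rfl
  have hπsurj : Function.Surjective π := by
    intro y
    refine ⟨Fin.cons 0 y, ?_⟩
    funext i
    rw [hπ]
    simp
  have hrange : Set.range u
      = π '' Set.range (fun V : FDRep ℂ G => fun i => V.character (g0 i)) := by
    ext z
    constructor
    · rintro ⟨V, rfl⟩
      refine ⟨_, ⟨V, rfl⟩, ?_⟩
      funext i
      rw [hπ]
      simp [hg0, hu]
    · rintro ⟨w, ⟨V, rfl⟩, rfl⟩
      refine ⟨V, ?_⟩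
      funext i
      rw [hπ]
      simp [hg0, hu]
  have hspanu : Submodule.span ℂ (Set.range u) = ⊤ := by
    rw [hrange, Submodule.span_image, hspan, Submodule.map_top, LinearMap.range_eq_top]
    exact hπsurj
  obtain ⟨y, hyP⟩ : ∃ y : Fin m → ℂ, MvPolynomial.eval y P ≠ 0 := by
    by_contra h
    push_neg at h
    exact hP (MvPolynomial.funext fun x => by rw [h x, map_zero])
  have hymem : y ∈ Submodule.span ℂ (Set.range u) := by rw [hspanu]; trivial
  rw [Finsupp.mem_span_range_iff_exists_finsupp] at hymem
  obtain ⟨cc, hcc⟩ := hymem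
  set s := cc.support with hs
  let sub : Fin m → MvPolynomial ↥s ℂ :=
    fun i => ∑ j : ↥s, MvPolynomial.C (u j i) * MvPolynomial.X j
  let Q : MvPolynomial ↥s ℂ := MvPolynomial.aeval sub P
  have hQeval : ∀ x : ↥s → ℂ, MvPolynomial.eval x Q
      = MvPolynomial.eval (fun i => ∑ j : ↥s, x j * u j i) P := by
    intro x
    show MvPolynomial.eval x (MvPolynomial.aeval sub P) = _
    rw [MvPolynomial.aeval_def, MvPolynomial.eval₂_comp_left (MvPolynomial.eval x)]
    congr 1
    · ext r
      simp
    · funext i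
      simp [sub, mul_comm]
  have hQne : Q ≠ 0 := by
    intro h0
    apply hyP
    have h1 := hQeval (fun j => cc j)
    rw [h0, map_zero] at h1
    have h2 : (fun i => ∑ j : ↥s, cc j * u j i) = y := by
      funext i
      rw [← hcc]
      rw [Finsupp.sum]
      rw [← hs, ← Finset.sum_attach s (fun j => (cc j • u j))]
      rw [Finset.sum_apply]
      simp [smul_eq_mul]
    rw [h2] at h1
    exact h1.symm
  obtain ⟨N, hN⟩ := aux_nat_point' Q hQne
  have hmem : (∑ j : ↥s, (N j) • u j) ∈ msub :=
    sum_mem (fun j _ => AddSubmonoid.nsmul_mem msub ⟨(j : FDRep ℂ G), rfl⟩ (N j))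
  obtain ⟨V, hV⟩ := hmem
  refine ⟨V, ?_⟩
  have hgoal : (fun i => FDRep.character V (γ i) - (Module.finrank ℂ V : ℂ))
      = fun i => ∑ j : ↥s, (N j : ℂ) * u j i := by
    funext i
    have h3 := congrFun hV i
    rw [Finset.sum_apply] at h3
    have h4 : u V i = FDRep.character V (γ i) - (Module.finrank ℂ V : ℂ) := by
      rw [hu]
      simp [FDRep.char_one]
    rw [← h4, h3]
    refine Finset.sum_congr rfl fun j _ => ?_
    simp [nsmul_eq_mul]
  rw [hgoal, ← hQeval]
  exact hN
end

section
/- For every integer N ≥ 1 and every matrix A ∈ SL_N(ℂ) (i.e., det A = 1), there exist invertible matrices X, Y ∈ GL_N(ℂ) such that X Y X^{-1} Y^{-1} = A. -/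
open Matrix

variable {m : Type*} [Fintype m] [DecidableEq m]

/-- similarity with explicit two-sided-inverse witnesses -/
def Sim (A B : Matrix m m ℂ) : Prop :=
  ∃ P Q : Matrix m m ℂ, P * Q = 1 ∧ Q * P = 1 ∧ A = P * B * Q

theorem Sim.refl (A : Matrix m m ℂ) : Sim A A :=
  ⟨1, 1, by simp, by simp, by simp⟩

theorem Sim.trans {A B C : Matrix m m ℂ} (h1 : Sim A B) (h2 : Sim B C) : Sim A C := by
  obtain ⟨P, Q, hPQ, hQP, rfl⟩ := h1
  obtain ⟨R, S, hRS, hSR, rfl⟩ := h2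
  refine ⟨P * R, S * Q, ?_, ?_, by noncomm_ring⟩
  · calc P * R * (S * Q) = P * (R * S) * Q := by noncomm_ring
      _ = 1 := by rw [hRS]; simpa using hPQ
  · calc S * Q * (P * R) = S * (Q * P) * R := by noncomm_ring
      _ = 1 := by rw [hQP]; simpa using hSR

theorem Sim.symm {A B : Matrix m m ℂ} (h : Sim A B) : Sim B A := by
  obtain ⟨P, Q, hPQ, hQP, rfl⟩ := h
  refine ⟨Q, P, hQP, hPQ, ?_⟩
  calc B = (Q * P) * B * (Q * P) := by rw [hQP]; noncomm_ring
    _ = Q * (P * B * Q) * P := by noncomm_ring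

theorem Sim.conj {A B : Matrix m m ℂ} (P Q : Matrix m m ℂ) (hPQ : P * Q = 1) (hQP : Q * P = 1)
    (h : Sim A B) : Sim (P * A * Q) B :=
  Sim.trans ⟨P, Q, hPQ, hQP, rfl⟩ h

theorem Sim.transpose' {A B : Matrix m m ℂ} (h : Sim A B) : Sim Aᵀ Bᵀ := by
  obtain ⟨P, Q, hPQ, hQP, rfl⟩ := h
  exact ⟨Qᵀ, Pᵀ, by rw [← transpose_mul, hPQ, transpose_one],
    by rw [← transpose_mul, hQP, transpose_one], by simp [Matrix.mul_assoc]⟩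

theorem Sim.submatrix {l : Type*} [Fintype l] [DecidableEq l] {A B : Matrix m m ℂ}
    (e : l ≃ m) (h : Sim A B) : Sim (A.submatrix e e) (B.submatrix e e) := by
  obtain ⟨P, Q, hPQ, hQP, rfl⟩ := h
  refine ⟨P.submatrix e e, Q.submatrix e e, ?_, ?_, ?_⟩
  · rw [submatrix_mul_equiv, hPQ, submatrix_one_equiv]
  · rw [submatrix_mul_equiv, hQP, submatrix_one_equiv]
  · rw [submatrix_mul_equiv, submatrix_mul_equiv]

theorem Sim.det_eq {A B : Matrix m m ℂ} (h : Sim A B) : A.det = B.det := by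
  obtain ⟨P, Q, hPQ, hQP, rfl⟩ := h
  have h1 : P.det * Q.det = 1 := by rw [← det_mul, hPQ, det_one]
  rw [det_mul, det_mul]
  calc P.det * B.det * Q.det = (P.det * Q.det) * B.det := by ring
    _ = B.det := by rw [h1, one_mul]

/-- permuting a diagonal matrix -/
theorem sim_diagonal_comp_perm (d : m → ℂ) (σ : Equiv.Perm m) :
    Sim (diagonal (d ∘ σ)) (diagonal d) := by
  refine ⟨σ.toPEquiv.toMatrix, σ.symm.toPEquiv.toMatrix, ?_, ?_, ?_⟩
  · rw [← PEquiv.toMatrix_trans, ← Equiv.toPEquiv_trans, Equiv.self_trans_symm,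
      Equiv.toPEquiv_refl, PEquiv.toMatrix_refl]
  · rw [← PEquiv.toMatrix_trans, ← Equiv.toPEquiv_trans, Equiv.symm_trans_self,
      Equiv.toPEquiv_refl, PEquiv.toMatrix_refl]
  · rw [PEquiv.toMatrix_toPEquiv_mul, PEquiv.mul_toMatrix_toPEquiv, Equiv.symm_symm,
      submatrix_submatrix]
    ext i j
    simp [Matrix.submatrix, Matrix.diagonal]

variable {n : Type*} [Fintype n] [DecidableEq n]

theorem sim_lower (μ₁ : ℂ) (μ' : n → ℂ) (h : ∀ i, μ' i ≠ μ₁) (v : Matrix n (Fin 1) ℂ) :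
    Sim (fromBlocks (μ₁ • (1 : Matrix (Fin 1) (Fin 1) ℂ)) 0 v (diagonal μ'))
      (diagonal (Sum.elim (fun _ => μ₁) μ')) := by
  set w : Matrix n (Fin 1) ℂ := diagonal (fun i => (μ₁ - μ' i)⁻¹) * v with hw
  have key : (μ₁ • (1 : Matrix n n ℂ) - diagonal μ') * w = v := by
    rw [smul_one_eq_diagonal, diagonal_sub, hw, ← Matrix.mul_assoc, diagonal_mul_diagonal]
    have : (fun i => (μ₁ - μ' i) * (μ₁ - μ' i)⁻¹) = fun _ => 1 := by
      funext i
      exact mul_inv_cancel₀ (sub_ne_zero.2 (Ne.symm (h i)))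
    rw [this, diagonal_one, Matrix.one_mul]
  refine ⟨fromBlocks 1 0 w 1, fromBlocks 1 0 (-w) 1, ?_, ?_, ?_⟩
  · rw [fromBlocks_multiply]; simp
  · rw [fromBlocks_multiply]; simp
  · rw [← fromBlocks_diagonal, fromBlocks_multiply, fromBlocks_multiply]
    simp only [Matrix.mul_one, Matrix.one_mul, Matrix.mul_zero, Matrix.zero_mul,
      add_zero, zero_add, Matrix.mul_neg]
    have hwd : w * (diagonal fun _ : Fin 1 => μ₁) = μ₁ • w := by
      ext i j
      rw [mul_diagonal]
      simp [mul_comm]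
    have h2 : w * (diagonal fun _ : Fin 1 => μ₁) + -(diagonal μ' * w) = v := by
      rw [hwd, ← sub_eq_add_neg, ← key, Matrix.sub_mul, Matrix.smul_mul, Matrix.one_mul]
    rw [h2, smul_one_eq_diagonal]
    simp


theorem sim_lower' {B' : Matrix n n ℂ} {μ' : n → ℂ} (hB' : Sim B' (diagonal μ'))
    (μ₁ : ℂ) (h : ∀ i, μ' i ≠ μ₁) (v : Matrix n (Fin 1) ℂ) :
    Sim (fromBlocks (μ₁ • (1 : Matrix (Fin 1) (Fin 1) ℂ)) 0 v B')
      (diagonal (Sum.elim (fun _ => μ₁) μ')) := by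
  obtain ⟨P, Q, hPQ, hQP, rfl⟩ := hB'
  have key : fromBlocks (μ₁ • (1 : Matrix (Fin 1) (Fin 1) ℂ)) 0 v (P * diagonal μ' * Q)
      = fromBlocks 1 0 0 P *
        fromBlocks (μ₁ • (1 : Matrix (Fin 1) (Fin 1) ℂ)) 0 (Q * v) (diagonal μ') *
        fromBlocks 1 0 0 Q := by
    rw [fromBlocks_multiply, fromBlocks_multiply]
    simp only [Matrix.one_mul, Matrix.mul_one, Matrix.zero_mul, Matrix.mul_zero, add_zero,
      zero_add, Matrix.mul_assoc]
    rw [← Matrix.mul_assoc P Q v, hPQ, Matrix.one_mul]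
  rw [key]
  refine Sim.conj _ _ ?_ ?_ (sim_lower μ₁ μ' h (Q * v))
  · rw [fromBlocks_multiply]; simp [hPQ]
  · rw [fromBlocks_multiply]; simp [hQP]

theorem sim_upper' {C' : Matrix n n ℂ} {κ' : n → ℂ} (hC' : Sim C' (diagonal κ'))
    (κ₁ : ℂ) (h : ∀ i, κ' i ≠ κ₁) (u : Matrix (Fin 1) n ℂ) :
    Sim (fromBlocks (κ₁ • (1 : Matrix (Fin 1) (Fin 1) ℂ)) u 0 C')
      (diagonal (Sum.elim (fun _ => κ₁) κ')) := by
  have hCt : Sim C'ᵀ (diagonal κ') := by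
    have := hC'.transpose'
    rwa [diagonal_transpose] at this
  have hl := sim_lower' hCt κ₁ h uᵀ
  have := hl.transpose'
  rwa [fromBlocks_transpose, transpose_transpose, transpose_zero, transpose_transpose,
    transpose_smul, transpose_one, diagonal_transpose] at this
theorem scalar_case {N : ℕ} (hN : 1 ≤ N) (α : ℂ) (hα : α ^ N = 1) :
    ∃ (μ : Fin N → ℂ) (B C : Matrix (Fin N) (Fin N) ℂ),
      Function.Injective μ ∧ (∀ i, μ i ≠ 0) ∧
      α • (1 : Matrix (Fin N) (Fin N) ℂ) = B * C ∧
      Sim B (diagonal μ) ∧ Sim C (diagonal fun i => (μ i)⁻¹) := by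
  have hα0 : α ≠ 0 := by
    intro h0; rw [h0, zero_pow (by omega : N ≠ 0)] at hα; exact zero_ne_one hα
  set u : ℂˣ := Units.mk0 α hα0 with hu
  have huval : (u : ℂ) = α := rfl
  have huN : u ^ N = 1 := Units.ext (by simpa [huval] using hα)
  have hfin : 0 < orderOf u := orderOf_pos_iff.2 (isOfFinOrder_iff_pow_eq_one.2 ⟨N, by omega, huN⟩)
  have hdvd : orderOf u ∣ N := orderOf_dvd_of_pow_eq_one huN
  have hαd : α ^ orderOf u = 1 := by
    have := congrArg (Units.val) (pow_orderOf_eq_one u)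
    rw [Units.val_pow_eq_pow_val, Units.val_one, huval] at this
    exact this
  obtain ⟨d', hd'⟩ : ∃ d', orderOf u = d' + 1 := ⟨orderOf u - 1, by omega⟩
  rw [hd'] at hdvd hαd
  let e : Fin (N / (d' + 1)) × Fin (d' + 1) ≃ Fin N :=
    finProdFinEquiv.trans (finCongr (Nat.div_mul_cancel hdvd))
  set ν : Fin N → ℂ := fun i => 2 ^ ((e.symm i).1 : ℕ) * α ^ ((e.symm i).2 : ℕ) with hν
  have hν0 : ∀ i, ν i ≠ 0 := fun i => mul_ne_zero (pow_ne_zero _ two_ne_zero) (pow_ne_zero _ hα0)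
  have habs : ‖α‖ = 1 := by
    have h2 : ‖α‖ ^ N = 1 := by rw [← norm_pow, hα, norm_one]
    rcases lt_trichotomy ‖α‖ 1 with hl | he | hg
    · have := pow_lt_one₀ (norm_nonneg α) hl (by omega : N ≠ 0)
      rw [h2] at this; exact absurd this (lt_irrefl 1)
    · exact he
    · have := one_lt_pow₀ hg (by omega : N ≠ 0)
      rw [h2] at this; exact absurd this (lt_irrefl 1)
  have hinj : Function.Injective ν := by
    intro i i' hii
    have h1 : ((e.symm i).1 : ℕ) = ((e.symm i').1 : ℕ) := by
      have habseq := congrArg (‖·‖) hii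
      simp only [hν, norm_mul, norm_pow, habs, Complex.norm_two, one_pow, mul_one] at habseq
      exact pow_right_injective₀ (by norm_num : (0:ℝ) < 2) (by norm_num) habseq
    have h2 : α ^ ((e.symm i).2 : ℕ) = α ^ ((e.symm i').2 : ℕ) := by
      have h2' := hii
      simp only [hν, h1] at h2'
      exact mul_left_cancel₀ (pow_ne_zero _ (two_ne_zero : (2:ℂ) ≠ 0)) h2'
    have h2u : u ^ ((e.symm i).2 : ℕ) = u ^ ((e.symm i').2 : ℕ) := Units.ext (by simpa [huval] using h2)
    have h3 : ((e.symm i).2 : ℕ) = ((e.symm i').2 : ℕ) :=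
      pow_injOn_Iio_orderOf (by simp only [hd', Set.mem_Iio]; exact (e.symm i).2.isLt)
        (by simp only [hd', Set.mem_Iio]; exact (e.symm i').2.isLt) h2u
    have : e.symm i = e.symm i' := Prod.ext (Fin.ext h1) (Fin.ext h3)
    simpa using congrArg e this
  refine ⟨ν, diagonal ν, diagonal (fun i => α * (ν i)⁻¹), hinj, hν0, ?_, Sim.refl _, ?_⟩
  · have hfun : (fun i => ν i * (α * (ν i)⁻¹)) = fun _ : Fin N => α := by
      funext i
      rw [mul_comm α ((ν i)⁻¹), ← mul_assoc, mul_inv_cancel₀ (hν0 i), one_mul]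
    rw [diagonal_mul_diagonal, hfun, smul_one_eq_diagonal]
  · set ρ : Equiv.Perm (Fin (d' + 1)) := finRotate (d' + 1) with hρ
    set π : Equiv.Perm (Fin N) := e.permCongr (Equiv.prodCongr (Equiv.refl (Fin (N/(d'+1)))) ρ)
      with hπ
    have hπapp : ∀ i, π i = e ((e.symm i).1, ρ (e.symm i).2) := by
      intro i
      simp [hπ, Equiv.permCongr_apply, Equiv.prodCongr_apply]
      rfl
    have key : (fun i => (ν i)⁻¹) = (fun i => α * (ν i)⁻¹) ∘ π := by
      funext i
      have hsymm : e.symm (π i) = ((e.symm i).1, ρ (e.symm i).2) := by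
        rw [hπapp, Equiv.symm_apply_apply]
      have hkey : α ^ ((ρ (e.symm i).2 : Fin (d' + 1)) : ℕ) = α ^ (((e.symm i).2 : ℕ) + 1) := by
        rw [hρ, finRotate_succ_apply, Fin.val_add_one]
        split
        · next hlast =>
            rw [hlast]
            simp only [Fin.val_last, pow_zero]
            rw [← hαd, pow_succ]
        · rfl
      simp only [Function.comp_apply, hν, hsymm]
      rw [hkey, pow_succ]
      field_simp
    have hsim := sim_diagonal_comp_perm (fun i => α * (ν i)⁻¹) π
    rw [← key] at hsim
    exact hsim.symm
open Matrix

theorem forall_eigen_scalar {N : ℕ} (B : Matrix (Fin (N+2)) (Fin (N+2)) ℂ)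
    (h : ∀ v : Fin (N+2) → ℂ, ∃ c : ℂ, B.mulVec v = c • v) : ∃ c : ℂ, B = c • 1 := by
  have hcol : ∀ j i : Fin (N+2), B.mulVec (Pi.single j (1:ℂ)) i = B i j := by
    intro j i
    rw [Matrix.mulVec_single]
    simp
  obtain ⟨c, hc⟩ := h (Pi.single 0 1)
  refine ⟨c, ?_⟩
  have key : ∀ j : Fin (N+2),
      B.mulVec (Pi.single j (1:ℂ)) = c • (Pi.single j (1:ℂ) : Fin (N+2) → ℂ) := by
    intro j
    by_cases hj : j = 0
    · subst hj; exact hc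
    · obtain ⟨cj, hcj⟩ := h (Pi.single j 1)
      obtain ⟨cs, hcs⟩ := h (Pi.single 0 1 + Pi.single j 1)
      have hadd : B.mulVec (Pi.single 0 1 + Pi.single j 1)
          = c • (Pi.single 0 (1:ℂ) : Fin (N+2) → ℂ) + cj • (Pi.single j (1:ℂ) : Fin (N+2) → ℂ) := by
        rw [Matrix.mulVec_add, hc, hcj]
      rw [hcs] at hadd
      have h0 := congrFun hadd 0
      have hjj := congrFun hadd j
      simp only [Pi.add_apply, Pi.smul_apply, Pi.single_eq_same,
        Pi.single_eq_of_ne (Ne.symm hj), Pi.single_eq_of_ne hj, smul_eq_mul,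
        mul_one, mul_zero, add_zero, zero_add] at h0 hjj
      rw [hcj, ← hjj, h0]
  ext i j
  have hkj := congrFun (key j) i
  rw [hcol] at hkj
  rw [hkj]
  by_cases hij : i = j
  · subst hij; simp
  · simp [Pi.single_eq_of_ne hij, Matrix.one_apply_ne hij]

theorem reduce {N : ℕ} (A : Matrix (Fin (N+2)) (Fin (N+2)) ℂ)
    (hns : ∀ c : ℂ, A ≠ c • 1) :
    ∃ P Q M : Matrix (Fin (N+2)) (Fin (N+2)) ℂ,
      P * Q = 1 ∧ Q * P = 1 ∧ A = P * M * Q ∧ M 0 0 = 1 := by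
  have hex : ∃ v : Fin (N+2) → ℂ, LinearIndependent ℂ ![v, A.mulVec v - v] := by
    by_contra hcon
    push_neg at hcon
    have hall : ∀ v : Fin (N+2) → ℂ, ∃ c : ℂ, (A - 1).mulVec v = c • v := by
      intro v
      have hni := hcon v
      rw [linearIndependent_fin2] at hni
      push_neg at hni
      simp only [Matrix.cons_val_one, Matrix.head_cons, Matrix.cons_val_zero] at hni
      have hsub : (A - 1).mulVec v = A.mulVec v - v := by
        rw [Matrix.sub_mulVec, Matrix.one_mulVec]
      rcases eq_or_ne (A.mulVec v - v) 0 with h0 | h0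
      · exact ⟨0, by rw [hsub, h0, zero_smul]⟩
      · obtain ⟨a, ha⟩ := hni h0
        rcases eq_or_ne a 0 with ha0 | ha0
        · exfalso
          rw [ha0, zero_smul] at ha
          rw [← ha] at h0
          simp at h0
        · refine ⟨a⁻¹, ?_⟩
          rw [hsub]
          calc A *ᵥ v - v = a⁻¹ • (a • (A *ᵥ v - v)) := by
                rw [smul_smul, inv_mul_cancel₀ ha0, one_smul]
            _ = a⁻¹ • v := by rw [ha]
    obtain ⟨c, hcs⟩ := forall_eigen_scalar (A - 1) hall
    refine hns (c + 1) ?_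
    have : A - 1 = c • 1 := hcs
    calc A = (A - 1) + 1 := by abel
      _ = c • 1 + 1 := by rw [this]
      _ = (c + 1) • 1 := by rw [add_smul, one_smul]
  obtain ⟨v, hli⟩ := hex
  set w := A.mulVec v - v with hwdef
  have hvw : v ≠ w := by
    intro hvw'
    have h01 := hli.injective (a₁ := 0) (a₂ := 1) (by
      simp only [Matrix.cons_val_zero, Matrix.cons_val_one, Matrix.head_cons, ← hwdef, hvw'])
    exact absurd h01 (by norm_num)
  have hsub : LinearIndepOn ℂ id (Set.range ![v, w]) :=
    (linearIndepOn_id_range_iff hli.injective).mpr hli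
  set J := hsub.extend (Set.subset_univ _) with hJ
  let b0 := Module.Basis.extend hsub
  haveI : Fintype J := FiniteDimensional.fintypeBasisIndex b0
  have hcard : Fintype.card J = N + 2 := by
    rw [← Module.finrank_eq_card_basis b0, Module.finrank_fin_fun]
  let g0 : J ≃ Fin (N+2) := Fintype.equivFinOfCardEq hcard
  have hvJ : v ∈ J := hsub.subset_extend _ ⟨0, rfl⟩
  have hwJ : w ∈ J := hsub.subset_extend _ ⟨1, rfl⟩
  let vJ : J := ⟨v, hvJ⟩
  let wJ : J := ⟨w, hwJ⟩
  have hne : vJ ≠ wJ := fun h => hvw (congrArg Subtype.val h)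
  have hne01 : g0 vJ ≠ g0 wJ := fun h => hne (g0.injective h)
  have h0ne1 : (0 : Fin (N+2)) ≠ 1 := Fin.ne_of_val_ne (by norm_num)
  let τ := Equiv.swap (0 : Fin (N+2)) (g0 vJ)
  have hj1 : τ (g0 wJ) ≠ 0 := by
    intro hc
    have : τ (g0 wJ) = τ (g0 vJ) := by rw [hc, Equiv.swap_apply_right]
    exact hne01 (τ.injective this).symm
  let τ' := Equiv.swap (1 : Fin (N+2)) (τ (g0 wJ))
  let g : J ≃ Fin (N+2) := g0.trans (τ.trans τ')
  have hgv : g vJ = 0 := by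
    show τ' (τ (g0 vJ)) = 0
    rw [Equiv.swap_apply_right]
    exact Equiv.swap_apply_of_ne_of_ne h0ne1 (Ne.symm hj1)
  have hgw : g wJ = 1 := by
    show τ' (τ (g0 wJ)) = 1
    exact Equiv.swap_apply_right _ _
  let b := b0.reindex g
  have hb0 : b 0 = v := by
    rw [Module.Basis.reindex_apply, ← hgv, Equiv.symm_apply_apply]
    exact Module.Basis.extend_apply_self hsub vJ
  have hb1 : b 1 = w := by
    rw [Module.Basis.reindex_apply, ← hgw, Equiv.symm_apply_apply]
    exact Module.Basis.extend_apply_self hsub wJ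
  set f := Matrix.toLin' A with hf
  set M := LinearMap.toMatrix b b f with hM
  set cb := Pi.basisFun ℂ (Fin (N+2)) with hcb
  refine ⟨cb.toMatrix b, b.toMatrix cb, M, Module.Basis.toMatrix_mul_toMatrix_flip cb b,
    Module.Basis.toMatrix_mul_toMatrix_flip b cb, ?_, ?_⟩
  · have hconj := basis_toMatrix_mul_linearMap_toMatrix_mul_basis_toMatrix
      (b := cb) (b' := b) (c := cb) (c' := b) (f := f)
    rw [hM, hconj, hcb, hf]
    have h1 : LinearMap.toMatrix (Pi.basisFun ℂ (Fin (N+2))) (Pi.basisFun ℂ (Fin (N+2)))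
        (Matrix.toLin' A) = LinearMap.toMatrix' (Matrix.toLin' A) := by
      rw [LinearMap.toMatrix_eq_toMatrix']
    rw [h1, LinearMap.toMatrix'_toLin']
  · rw [hM, LinearMap.toMatrix_apply, hb0]
    have hfv : f v = v + w := by
      rw [hf, Matrix.toLin'_apply, hwdef]
      abel
    rw [hfv, map_add, ← hb0, ← hb1, b.repr_self, b.repr_self]
    rw [Finsupp.add_apply, Finsupp.single_eq_same, Finsupp.single_eq_of_ne h0ne1,
      add_zero]

theorem main_lemma : ∀ (N : ℕ) (A : Matrix (Fin N) (Fin N) ℂ), A.det = 1 →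
    ∃ (μ : Fin N → ℂ) (B C : Matrix (Fin N) (Fin N) ℂ),
      Function.Injective μ ∧ (∀ i, μ i ≠ 0) ∧ A = B * C ∧
      Sim B (diagonal μ) ∧ Sim C (diagonal fun i => (μ i)⁻¹) := by
  intro N
  induction N with
  | zero =>
      intro A hA
      refine ⟨Fin.elim0, A, 1, fun x => x.elim0, fun i => i.elim0, (Matrix.mul_one A).symm,
        ?_, ?_⟩
      · have : A = diagonal Fin.elim0 := by ext i j; exact i.elim0
        rw [this]; exact Sim.refl _
      · have : (1 : Matrix (Fin 0) (Fin 0) ℂ) = diagonal fun i => (Fin.elim0 i : ℂ)⁻¹ := by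
          ext i j; exact i.elim0
        rw [this]; exact Sim.refl _
  | succ n ih =>
      intro A hA
      by_cases hsc : ∃ c : ℂ, A = c • 1
      · obtain ⟨c, rfl⟩ := hsc
        have hc : c ^ (n + 1) = 1 := by
          rw [Matrix.det_smul, det_one, mul_one, Fintype.card_fin] at hA
          exact hA
        obtain ⟨μ, B, C, h1, h2, h3, h4, h5⟩ := scalar_case (by omega) c hc
        exact ⟨μ, B, C, h1, h2, h3, h4, h5⟩
      · push_neg at hsc
        rcases Nat.eq_zero_or_pos n with hn0 | hnpos
        · subst hn0
          exfalso
          apply hsc (A 0 0)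
          ext i j
          fin_cases i; fin_cases j
          simp [Matrix.one_apply]
        · obtain ⟨m, rfl⟩ : ∃ m, n = m + 1 := ⟨n - 1, by omega⟩
          obtain ⟨P, Q, M, hPQ, hQP, hAPMQ, hM00⟩ := reduce A hsc
          set eqv : Fin 1 ⊕ Fin (m + 1) ≃ Fin (m + 2) :=
            finSumFinEquiv.trans (finCongr (by omega)) with heqv
          set M' := M.submatrix eqv eqv with hM'def
          have htb : M'.toBlocks₁₁ = (1 : Matrix (Fin 1) (Fin 1) ℂ) := by
            ext i j
            fin_cases i; fin_cases j
            have h00 : eqv (Sum.inl ⟨0, by omega⟩) = 0 := rfl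
            simp only [toBlocks₁₁, hM'def, Matrix.submatrix_apply, of_apply, h00, hM00]
            rw [Matrix.one_apply_eq]
          set bl := M'.toBlocks₂₁ with hbl
          set cr := M'.toBlocks₁₂ with hcr
          set DD := M'.toBlocks₂₂ with hDD
          have hMblocks : M' = fromBlocks 1 cr bl DD := by
            rw [← htb, hcr, hbl, hDD, fromBlocks_toBlocks]
          have hdetM : M.det = 1 := by
            have : A.det = M.det := by
              rw [hAPMQ, det_mul, det_mul]
              have h1 : P.det * Q.det = 1 := by rw [← det_mul, hPQ, det_one]
              calc P.det * M.det * Q.det = (P.det * Q.det) * M.det := by ring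
                _ = M.det := by rw [h1, one_mul]
            rw [← this, hA]
          have hdetM' : M'.det = 1 := by
            rw [hM'def, det_submatrix_equiv_self, hdetM]
          have hdetA' : (DD - bl * cr).det = 1 := by
            have := det_fromBlocks_one₁₁ cr bl DD
            rw [← hMblocks, hdetM'] at this
            exact this.symm
          obtain ⟨μ', B', C', hμ'inj, hμ'0, hBC', hSB', hSC'⟩ := ih (DD - bl * cr) hdetA'
          obtain ⟨μ₁, hμ₁⟩ := Infinite.exists_notMem_finset
            ((Finset.univ.image μ') ∪ {(0 : ℂ)})
          have hμ₁0 : μ₁ ≠ 0 := by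
            intro h; exact hμ₁ (by rw [h]; simp)
          have hμ₁ne : ∀ i, μ' i ≠ μ₁ := by
            intro i h
            apply hμ₁
            rw [← h]
            exact Finset.mem_union_left _ (Finset.mem_image_of_mem μ' (Finset.mem_univ i))
          set B₀ : Matrix (Fin 1 ⊕ Fin (m+1)) (Fin 1 ⊕ Fin (m+1)) ℂ :=
            fromBlocks (μ₁ • 1) 0 (μ₁ • bl) B' with hB₀
          set C₀ : Matrix (Fin 1 ⊕ Fin (m+1)) (Fin 1 ⊕ Fin (m+1)) ℂ :=
            fromBlocks (μ₁⁻¹ • 1) (μ₁⁻¹ • cr) 0 C' with hC₀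
          have e11 : (μ₁ • (1 : Matrix (Fin 1) (Fin 1) ℂ)) * (μ₁⁻¹ • (1 : Matrix (Fin 1) (Fin 1) ℂ)) = 1 := by
            rw [Matrix.mul_smul, Matrix.smul_mul, smul_smul, inv_mul_cancel₀ hμ₁0, one_smul,
              Matrix.one_mul]
          have e12 : (μ₁ • (1 : Matrix (Fin 1) (Fin 1) ℂ)) * (μ₁⁻¹ • cr) = cr := by
            rw [Matrix.mul_smul, Matrix.smul_mul, smul_smul, inv_mul_cancel₀ hμ₁0, one_smul,
              Matrix.one_mul]
          have e21 : (μ₁ • bl) * (μ₁⁻¹ • (1 : Matrix (Fin 1) (Fin 1) ℂ)) = bl := by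
            rw [Matrix.mul_smul, Matrix.smul_mul, smul_smul, inv_mul_cancel₀ hμ₁0, one_smul,
              Matrix.mul_one]
          have e22 : (μ₁ • bl) * (μ₁⁻¹ • cr) + B' * C' = DD := by
            rw [Matrix.mul_smul, Matrix.smul_mul, smul_smul, inv_mul_cancel₀ hμ₁0, one_smul,
              ← hBC']
            abel
          have hB₀C₀ : B₀ * C₀ = M' := by
            rw [hB₀, hC₀, fromBlocks_multiply, hMblocks]
            simp only [Matrix.zero_mul, Matrix.mul_zero, add_zero, zero_add]
            rw [e11, e12, e21, e22]
          have hSimB₀ : Sim B₀ (diagonal (Sum.elim (fun _ => μ₁) μ')) :=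
            sim_lower' hSB' μ₁ hμ₁ne (μ₁ • bl)
          have hSimC₀ : Sim C₀ (diagonal (Sum.elim (fun _ => μ₁⁻¹) (fun i => (μ' i)⁻¹))) :=
            sim_upper' hSC' μ₁⁻¹ (fun i h => hμ₁ne i (inv_injective h)) (μ₁⁻¹ • cr)
          -- transport back to Fin (m+2)
          set μf : Fin (m + 2) → ℂ := (Sum.elim (fun _ => μ₁) μ') ∘ eqv.symm with hμf
          have hMsub : M = M'.submatrix eqv.symm eqv.symm := by
            rw [hM'def, submatrix_submatrix]
            have h1 : (eqv : Fin 1 ⊕ Fin (m+1) → Fin (m+2)) ∘ eqv.symm = id := by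
              funext x; simp
            rw [h1, submatrix_id_id]
          refine ⟨μf, P * (B₀.submatrix eqv.symm eqv.symm) * Q,
            P * (C₀.submatrix eqv.symm eqv.symm) * Q, ?_, ?_, ?_, ?_, ?_⟩
          · intro x y hxy
            have := hμ₁ne
            rw [hμf] at hxy
            have hsum : Function.Injective (Sum.elim (fun _ : Fin 1 => μ₁) μ') := by
              intro a b hab
              match a, b with
              | Sum.inl a, Sum.inl b => rw [Subsingleton.elim a b]
              | Sum.inl a, Sum.inr b => exact absurd hab.symm (hμ₁ne b)
              | Sum.inr a, Sum.inl b => exact absurd hab (hμ₁ne a)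
              | Sum.inr a, Sum.inr b => rw [hμ'inj hab]
            exact eqv.symm.injective (hsum hxy)
          · intro i
            rw [hμf]
            rcases h : eqv.symm i with x | x
            · simp [h, hμ₁0]
            · simp [h, hμ'0 x]
          · have hBsCs : (B₀.submatrix eqv.symm eqv.symm) * (C₀.submatrix eqv.symm eqv.symm)
                = M := by
              rw [submatrix_mul_equiv B₀ C₀ eqv.symm eqv.symm eqv.symm, hB₀C₀, ← hMsub]
            rw [hAPMQ, ← hBsCs]
            simp only [Matrix.mul_assoc]
            rw [← Matrix.mul_assoc Q P, hQP, Matrix.one_mul]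
          · have h1 := (hSimB₀.submatrix eqv.symm).conj P Q hPQ hQP
            rwa [submatrix_diagonal_equiv] at h1
          · have h1 := (hSimC₀.submatrix eqv.symm).conj P Q hPQ hQP
            rw [submatrix_diagonal_equiv] at h1
            have h2 : ((Sum.elim (fun _ => μ₁⁻¹) fun i => (μ' i)⁻¹) ∘ eqv.symm)
                = fun i => (μf i)⁻¹ := by
              funext x
              rw [hμf]
              rcases h : eqv.symm x with y | y <;> simp [h]
            rwa [h2] at h1

/-- Every complex matrix of determinant `1` is a commutator of invertible matrices:
for `A ∈ SL_N(ℂ)` there are `X, Y ∈ GL_N(ℂ)` with `X Y X⁻¹ Y⁻¹ = A`. -/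
theorem exists_commutator_eq_of_det_eq_one (N : ℕ) (hN : 1 ≤ N)
    (A : Matrix (Fin N) (Fin N) ℂ) (hA : A.det = 1) :
    ∃ X Y : Matrix (Fin N) (Fin N) ℂ, IsUnit X ∧ IsUnit Y ∧ X * Y * X⁻¹ * Y⁻¹ = A := by
  obtain ⟨μ, B, C, hinj, h0, hBC, ⟨P₁, Q₁, h11, h12, hB⟩, ⟨P₂, Q₂, h21, h22, hC⟩⟩ :=
    main_lemma N A hA
  set Dμ := diagonal μ with hDμ
  set Dν := diagonal (fun i => (μ i)⁻¹) with hDν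
  have hDD : Dμ * Dν = 1 := by
    rw [hDμ, hDν, diagonal_mul_diagonal]
    have : (fun i => μ i * (μ i)⁻¹) = fun _ : Fin N => (1:ℂ) := by
      funext i; exact mul_inv_cancel₀ (h0 i)
    rw [this, diagonal_one]
  have hDD' : Dν * Dμ = 1 := by
    rw [hDμ, hDν, diagonal_mul_diagonal]
    have : (fun i => (μ i)⁻¹ * μ i) = fun _ : Fin N => (1:ℂ) := by
      funext i; exact inv_mul_cancel₀ (h0 i)
    rw [this, diagonal_one]
  set Binv := P₁ * Dν * Q₁ with hBinv
  have hBBinv : B * Binv = 1 := by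
    rw [hB, hBinv]
    calc P₁ * Dμ * Q₁ * (P₁ * Dν * Q₁) = P₁ * Dμ * (Q₁ * P₁) * Dν * Q₁ := by
          simp only [Matrix.mul_assoc]
      _ = P₁ * (Dμ * Dν) * Q₁ := by rw [h12]; simp only [Matrix.mul_one, Matrix.mul_assoc]
      _ = 1 := by rw [hDD, Matrix.mul_one, h11]
  have hBinvB : Binv * B = 1 := by
    rw [hB, hBinv]
    calc P₁ * Dν * Q₁ * (P₁ * Dμ * Q₁) = P₁ * Dν * (Q₁ * P₁) * Dμ * Q₁ := by
          simp only [Matrix.mul_assoc]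
      _ = P₁ * (Dν * Dμ) * Q₁ := by rw [h12]; simp only [Matrix.mul_one, Matrix.mul_assoc]
      _ = 1 := by rw [hDD', Matrix.mul_one, h11]
  set Y := P₂ * Q₁ with hY
  set Yinv := P₁ * Q₂ with hYinv
  have hYY : Y * Yinv = 1 := by
    rw [hY, hYinv]
    calc P₂ * Q₁ * (P₁ * Q₂) = P₂ * (Q₁ * P₁) * Q₂ := by simp only [Matrix.mul_assoc]
      _ = 1 := by rw [h12, Matrix.mul_one, h21]
  have hYinvY : Yinv * Y = 1 := by
    rw [hY, hYinv]
    calc P₁ * Q₂ * (P₂ * Q₁) = P₁ * (Q₂ * P₂) * Q₁ := by simp only [Matrix.mul_assoc]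
      _ = 1 := by rw [h22, Matrix.mul_one, h11]
  have hCY : C = Y * Binv * Yinv := by
    rw [hC, hY, hBinv, hYinv]
    calc P₂ * Dν * Q₂ = P₂ * ((Q₁ * P₁) * Dν * (Q₁ * P₁)) * Q₂ := by
          rw [h12]; simp only [Matrix.one_mul, Matrix.mul_one]
      _ = P₂ * Q₁ * (P₁ * Dν * Q₁) * (P₁ * Q₂) := by simp only [Matrix.mul_assoc]
  refine ⟨B, Y, ⟨⟨B, Binv, hBBinv, hBinvB⟩, rfl⟩, ⟨⟨Y, Yinv, hYY, hYinvY⟩, rfl⟩, ?_⟩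
  rw [Matrix.inv_eq_right_inv hBBinv, Matrix.inv_eq_right_inv hYY]
  rw [hBC, hCY]
  simp only [Matrix.mul_assoc]
end
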